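/- arXiv:1307.6598 — 4 statements merged into one kernel-verified Lean document; each statement's English description precedes it below -/
import Mathlib

section
/- Let (R^•, d_0) be a cochain complex of k-vector spaces concentrated in degrees ≤ 0 with H^i(R^•, d_0) = 0 for all i < 0. Let R^•_ℏ = R^• ⊗_k k[ℏ] and let d_ℏ = d_0 + ℏ d_1 + … + ℏ^n d_n be an ℏ-linear degree +1 map with d_ℏ² = 0. Set Γ_i = ℏ^i R^•_ℏ and let F_i H^0_ℏ be the image of H^0(ℏ^i R^•_ℏ, d_ℏ) → H^0(R^•_ℏ, d_ℏ). Then for every i ≥ 0 there is a canonical isomorphism of k[ℏ]-modules F_i H^0_ℏ / F_{i+1} H^0_ℏ ≅ ℏ^i H^0(R^•, d_0). -/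
noncomputable section

open Polynomial TensorProduct

/-- `W n = k[ℏ] ⊗ R^{-n}`, the `ℏ`-linear extension of a complex in degrees `≤ 0`
(indexed here by `n ∈ ℕ` corresponding to cohomological degree `-n`). -/
abbrev Wc (k : Type*) [Field k] (V : ℕ → Type*) [∀ n, AddCommGroup (V n)]
    [∀ n, Module k (V n)] (n : ℕ) : Type _ := Polynomial k ⊗[k] V n

/-- Reduction modulo `ℏ`: evaluation of the polynomial variable at `0`. -/
def epsW (k : Type*) [Field k] (V : ℕ → Type*) [∀ n, AddCommGroup (V n)]
    [∀ n, Module k (V n)] (n : ℕ) : Wc k V n →ₗ[k] V n :=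
  (TensorProduct.lid k (V n)).toLinearMap.comp
    (LinearMap.rTensor (V n) (Polynomial.aeval (0 : k)).toLinearMap)

namespace PerturbAux

variable (k : Type*) [Field k] (V : ℕ → Type*)
  [∀ n, AddCommGroup (V n)] [∀ n, Module k (V n)]

/-- `divX` as a `k`-linear map. -/
def divXL : Polynomial k →ₗ[k] Polynomial k where
  toFun := Polynomial.divX
  map_add' := fun _ _ => Polynomial.divX_add
  map_smul' := fun c p => by
    simp only [RingHom.id_apply, Polynomial.smul_eq_C_mul, Polynomial.divX_C_mul]

/-- coefficient extraction `W n → V n`. -/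
def cW (n j : ℕ) : Wc k V n →ₗ[k] V n :=
  (TensorProduct.lid k (V n)).toLinearMap.comp
    (LinearMap.rTensor (V n) (Polynomial.lcoeff k j))

/-- `divX` on `W n`. -/
def DW (n : ℕ) : Wc k V n →ₗ[k] Wc k V n := LinearMap.rTensor (V n) (divXL k)

@[simp] lemma cW_tmul (n j : ℕ) (p : Polynomial k) (v : V n) :
    cW k V n j (p ⊗ₜ[k] v) = p.coeff j • v := by
  simp [cW]

lemma epsW_eq (n : ℕ) : epsW k V n = cW k V n 0 := by
  ext v
  simp [epsW, cW, Polynomial.coeff_zero_eq_eval_zero]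

lemma cW_zero_Xsmul (n : ℕ) (x : Wc k V n) : cW k V n 0 ((X : Polynomial k) • x) = 0 := by
  induction x using TensorProduct.induction_on with
  | zero => simp
  | tmul p v =>
      rw [TensorProduct.smul_tmul', smul_eq_mul, cW_tmul]
      simp [Polynomial.mul_coeff_zero]
  | add a b ha hb => rw [smul_add, map_add, ha, hb, add_zero]

lemma cW_succ_Xsmul (n j : ℕ) (x : Wc k V n) :
    cW k V n (j + 1) ((X : Polynomial k) • x) = cW k V n j x := by
  induction x using TensorProduct.induction_on with
  | zero => simp
  | tmul p v =>
      rw [TensorProduct.smul_tmul', smul_eq_mul, cW_tmul, cW_tmul, Polynomial.coeff_X_mul]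
  | add a b ha hb => rw [smul_add, map_add, map_add, ha, hb]

lemma X_smul_DW (n : ℕ) (x : Wc k V n) :
    (X : Polynomial k) • DW k V n x = x - (1 : Polynomial k) ⊗ₜ[k] (cW k V n 0 x) := by
  induction x using TensorProduct.induction_on with
  | zero => simp
  | tmul p v =>
      rw [DW, LinearMap.rTensor_tmul, TensorProduct.smul_tmul', smul_eq_mul, cW_tmul]
      rw [show (1 : Polynomial k) ⊗ₜ[k] (p.coeff 0 • v) = Polynomial.C (p.coeff 0) ⊗ₜ[k] v by
        rw [← TensorProduct.smul_tmul]
        congr 1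
        rw [Polynomial.smul_eq_C_mul, mul_one]]

      rw [← TensorProduct.sub_tmul]
      congr 1
      have := Polynomial.X_mul_divX_add (p := p)
      simp only [divXL, LinearMap.coe_mk, AddHom.coe_mk]
      linear_combination (norm := ring_nf) this
  | add a b ha hb =>
      rw [map_add, smul_add, ha, hb, map_add, TensorProduct.tmul_add]
      abel

lemma DW_X_smul (n : ℕ) (x : Wc k V n) : DW k V n ((X : Polynomial k) • x) = x := by
  induction x using TensorProduct.induction_on with
  | zero => simp
  | tmul p v =>
      rw [TensorProduct.smul_tmul', smul_eq_mul, DW, LinearMap.rTensor_tmul]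
      congr 1
      simp only [divXL, LinearMap.coe_mk, AddHom.coe_mk]
      ext m
      rw [Polynomial.coeff_divX, Polynomial.coeff_X_mul]
  | add a b ha hb => rw [smul_add, map_add, ha, hb]

end PerturbAux

namespace PerturbAux2

open PerturbAux

variable (k : Type*) [Field k] (V : ℕ → Type*)
  [∀ n, AddCommGroup (V n)] [∀ n, Module k (V n)]

lemma Xpow_smul_inj (n i : ℕ) {a b : Wc k V n}
    (h : (X : Polynomial k) ^ i • a = (X : Polynomial k) ^ i • b) : a = b := by
  induction i with
  | zero => simpa using h
  | succ m ih =>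
      apply ih
      have h' : (X : Polynomial k) • ((X : Polynomial k) ^ m • a)
          = (X : Polynomial k) • ((X : Polynomial k) ^ m • b) := by
        rw [smul_smul, smul_smul, ← pow_succ']
        exact h
      calc (X : Polynomial k) ^ m • a
          = DW k V n ((X : Polynomial k) • ((X : Polynomial k) ^ m • a)) :=
            (DW_X_smul k V n _).symm
        _ = DW k V n ((X : Polynomial k) • ((X : Polynomial k) ^ m • b)) := by rw [h']
        _ = (X : Polynomial k) ^ m • b := DW_X_smul k V n _

lemma cW_pow_zero (n i : ℕ) (x : Wc k V n) :
    cW k V n i ((X : Polynomial k) ^ i • x) = cW k V n 0 x := by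
  induction i with
  | zero => simp
  | succ m ih =>
      rw [pow_succ', mul_smul, cW_succ_Xsmul, ih]

lemma mem_Gamma (i : ℕ) (x : Wc k V 0) :
    x ∈ (Ideal.span {(X : Polynomial k) ^ i} • (⊤ : Submodule (Polynomial k) (Wc k V 0))) ↔
      ∃ w, x = (X : Polynomial k) ^ i • w := by
  constructor
  · intro hx
    refine Submodule.smul_induction_on hx ?_ ?_
    · rintro r hr m -
      obtain ⟨a, rfl⟩ := Ideal.mem_span_singleton'.mp hr
      exact ⟨a • m, by rw [mul_comm, mul_smul]⟩
    · rintro x y ⟨w1, rfl⟩ ⟨w2, rfl⟩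
      exact ⟨w1 + w2, by rw [smul_add]⟩
  · rintro ⟨w, rfl⟩
    exact Submodule.smul_mem_smul (Ideal.mem_span_singleton_self _) trivial

end PerturbAux2

set_option maxHeartbeats 2000000

open PerturbAux PerturbAux2

/-- Lemma on perturbed differentials (first version): if `(R^•, d₀)` is a complex of
`k`-vector spaces in degrees `≤ 0` (degree `-n` is `V n`), with vanishing cohomology in all
negative degrees, and `d_ℏ` is an `ℏ`-linear differential on `R^•[ℏ]` which reduces to `d₀`
modulo `ℏ`, then with `Γ_ℓ = ℏ^ℓ R^•[ℏ]` and `F_ℓ H⁰_ℏ` the image of `H⁰(ℏ^ℓ R^•_ℏ)` in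
`H⁰_ℏ`, one has `F_i H⁰_ℏ / F_{i+1} H⁰_ℏ ≅ ℏ^i H⁰(R^•, d₀) ≅ H⁰(R^•, d₀)`. -/
theorem perturbed_complex_graded_H0
    (k : Type*) [Field k] (V : ℕ → Type*)
    [∀ n, AddCommGroup (V n)] [∀ n, Module k (V n)]
    (d : ∀ n, V (n + 1) →ₗ[k] V n)
    (hd2 : ∀ n, (d n).comp (d (n + 1)) = 0)
    (hexact : ∀ n, LinearMap.ker (d n) ≤ LinearMap.range (d (n + 1)))
    (dh : ∀ n, Wc k V (n + 1) →ₗ[Polynomial k] Wc k V n)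
    (hdh2 : ∀ n, (dh n).comp (dh (n + 1)) = 0)
    (hmod : ∀ n, (epsW k V n).comp ((dh n).restrictScalars k) =
      (d n).comp (epsW k V (n + 1))) :
    ∀ i : ℕ,
      letI B : Submodule (Polynomial k) (Wc k V 0) := LinearMap.range (dh 0)
      letI Γ : ℕ → Submodule (Polynomial k) (Wc k V 0) :=
        fun ℓ => Ideal.span {(Polynomial.X : Polynomial k) ^ ℓ} • ⊤
      letI F : ℕ → Submodule (Polynomial k) ((Wc k V 0) ⧸ B) :=
        fun ℓ => (Γ ℓ).map B.mkQ
      Nonempty ((F i ⧸ Submodule.comap (F i).subtype (F (i + 1))) ≃ₗ[k]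
        (V 0 ⧸ LinearMap.range (d 0))) := by
  intro i
  set B : Submodule (Polynomial k) (Wc k V 0) := LinearMap.range (dh 0) with hB
  set Γ : ℕ → Submodule (Polynomial k) (Wc k V 0) :=
    fun ℓ => Ideal.span {(Polynomial.X : Polynomial k) ^ ℓ} • ⊤ with hΓ
  set F : ℕ → Submodule (Polynomial k) ((Wc k V 0) ⧸ B) :=
    fun ℓ => (Γ ℓ).map B.mkQ with hF
  -- pointwise form of `hmod`
  have hm : ∀ n (z : Wc k V (n+1)), cW k V n 0 (dh n z) = d n (cW k V (n+1) 0 z) := by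
    intro n z
    have := LinearMap.congr_fun (hmod n) z
    rwa [epsW_eq, epsW_eq] at this
  have hdd : ∀ (z : Wc k V 2), dh 0 (dh 1 z) = 0 := fun z => LinearMap.congr_fun (hdh2 0) z
  have memΓ : ∀ (ℓ:ℕ) (x : Wc k V 0),
      x ∈ Γ ℓ ↔ ∃ w, x = (X : Polynomial k) ^ ℓ • w := fun ℓ x => mem_Gamma k V ℓ x
  -- key lifting lemma
  have key : ∀ j (z : Wc k V 1), (∃ w, dh 0 z = (X : Polynomial k) ^ j • w) →
      ∃ u : Wc k V 1, dh 0 z = (X : Polynomial k) ^ j • dh 0 u := by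
    intro j
    induction j with
    | zero => intro z _; exact ⟨z, by simp⟩
    | succ m ih =>
        intro z hz
        obtain ⟨w, hw⟩ := hz
        obtain ⟨u, hu⟩ := ih z ⟨(X : Polynomial k) • w, by rw [hw, smul_smul, ← pow_succ]⟩
        have hdu : dh 0 u = (X : Polynomial k) • w := by
          apply Xpow_smul_inj k V 0 m
          rw [← hu, hw, smul_smul, ← pow_succ]
        have h0 : cW k V 1 0 u ∈ LinearMap.ker (d 0) := by
          rw [LinearMap.mem_ker, ← hm 0 u, hdu, cW_zero_Xsmul]
        obtain ⟨t, ht⟩ := hexact 0 h0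
        set u' := u - dh 1 ((1 : Polynomial k) ⊗ₜ[k] t) with hu'
        have hcu' : cW k V 1 0 u' = 0 := by
          rw [hu', map_sub, hm 1, cW_tmul, Polynomial.coeff_one_zero, one_smul, ht, sub_self]
        have hXu' : u' = (X : Polynomial k) • DW k V 1 u' := by
          rw [X_smul_DW, hcu', TensorProduct.tmul_zero, sub_zero]
        have hdu' : dh 0 u' = dh 0 u := by
          rw [hu', map_sub, hdd, sub_zero]
        refine ⟨DW k V 1 u', ?_⟩
        calc dh 0 z = (X : Polynomial k) ^ m • dh 0 u := hu
          _ = (X : Polynomial k) ^ m • dh 0 ((X : Polynomial k) • DW k V 1 u') := by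
              rw [← hXu', hdu']
          _ = (X : Polynomial k) ^ (m+1) • dh 0 (DW k V 1 u') := by
              rw [map_smul, smul_smul, ← pow_succ]
  -- the two comparison maps out of Γ i
  set ψ : ↥(Γ i) →ₗ[k] (V 0 ⧸ LinearMap.range (d 0)) :=
    (LinearMap.range (d 0)).mkQ ∘ₗ (cW k V 0 i) ∘ₗ ((Γ i).subtype.restrictScalars k) with hψ
  have hmemF : ∀ x : ↥(Γ i), B.mkQ ↑x ∈ F i := fun x => Submodule.mem_map_of_mem x.2
  set f0 : ↥(Γ i) →ₗ[Polynomial k] ↥(F i) :=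
    LinearMap.codRestrict (F i) (B.mkQ ∘ₗ (Γ i).subtype) hmemF with hf0
  set h' : ↥(Γ i) →ₗ[k]
      (↥(F i) ⧸ Submodule.comap (F i).subtype (F (i + 1))) :=
    (((Submodule.comap (F i).subtype (F (i + 1))).mkQ ∘ₗ f0).restrictScalars k) with hh'
  -- kernels agree
  have hker : LinearMap.ker h' = LinearMap.ker ψ := by
    ext x
    simp only [LinearMap.mem_ker, hh', hψ, LinearMap.coe_comp, Function.comp_apply,
      LinearMap.coe_restrictScalars, Submodule.mkQ_apply, Submodule.Quotient.mk_eq_zero,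
      Submodule.mem_comap, Submodule.coe_subtype]
    have hfx : ((f0 x : ↥(F i)) : Wc k V 0 ⧸ B) = B.mkQ ↑x := rfl
    rw [hfx]
    constructor
    · intro hx'
      obtain ⟨y, hyΓ, hy⟩ := Submodule.mem_map.mp hx'
      have hxy : (x : Wc k V 0) - y ∈ B := (Submodule.Quotient.eq B).mp hy.symm
      obtain ⟨z, hz⟩ := hxy
      obtain ⟨w, hw⟩ := (memΓ i ↑x).mp x.2
      obtain ⟨w', hw'⟩ := (memΓ (i+1) y).mp hyΓ
      have hdz : dh 0 z = (X : Polynomial k) ^ i • (w - (X : Polynomial k) • w') := by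
        rw [smul_sub, hz, hw, hw', smul_smul, ← pow_succ]
      obtain ⟨u, hu⟩ := key i z ⟨_, hdz⟩
      have hcx : cW k V 0 i ↑x = cW k V 0 i y + cW k V 0 i (dh 0 z) := by
        rw [hz, map_sub]; abel
      have hcy : cW k V 0 i y = 0 := by
        rw [hw', pow_succ, mul_smul, cW_pow_zero, cW_zero_Xsmul]
      have hcz : cW k V 0 i (dh 0 z) = d 0 (cW k V 1 0 u) := by
        rw [hu, cW_pow_zero, hm 0]
      rw [hcx, hcy, hcz]
      simpa using LinearMap.mem_range_self (d 0) (cW k V 1 0 u)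
    · intro hx'
      obtain ⟨v, hv⟩ := hx'
      obtain ⟨w, hw⟩ := (memΓ i ↑x).mp x.2
      set a := w - dh 0 ((1 : Polynomial k) ⊗ₜ[k] v) with ha
      have hca : cW k V 0 0 a = 0 := by
        rw [ha, map_sub, hm 0, cW_tmul, Polynomial.coeff_one_zero, one_smul]
        rw [show cW k V 0 0 w = cW k V 0 i ↑x by rw [hw, cW_pow_zero], ← hv, sub_self]
      have hXa : a = (X : Polynomial k) • DW k V 0 a := by
        rw [X_smul_DW, hca, TensorProduct.tmul_zero, sub_zero]
      have hsub : (X : Polynomial k) ^ i • w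
            - (X : Polynomial k) ^ i • dh 0 ((1 : Polynomial k) ⊗ₜ[k] v)
          = (X : Polynomial k) ^ i • a := by
        rw [ha, smul_sub]
      have hy2 : (x : Wc k V 0) - dh 0 ((X : Polynomial k) ^ i • ((1 : Polynomial k) ⊗ₜ[k] v))
          = (X : Polynomial k) ^ (i+1) • DW k V 0 a := by
        rw [map_smul, hw, hsub]
        conv_rhs => rw [pow_succ, mul_smul, ← hXa]
      refine Submodule.mem_map.mpr ⟨_, (memΓ (i+1) _).mpr ⟨DW k V 0 a, hy2⟩, ?_⟩
      have h0 : B.mkQ (dh 0 ((X : Polynomial k) ^ i • ((1 : Polynomial k) ⊗ₜ[k] v))) = 0 :=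
        (Submodule.Quotient.mk_eq_zero B).mpr ⟨_, rfl⟩
      rw [map_sub, h0, sub_zero]
  have hψs : Function.Surjective ψ := by
    intro q
    obtain ⟨v, rfl⟩ := Submodule.mkQ_surjective _ q
    refine ⟨⟨(X : Polynomial k) ^ i • ((1 : Polynomial k) ⊗ₜ[k] v),
      (memΓ i _).mpr ⟨_, rfl⟩⟩, ?_⟩
    simp only [hψ, LinearMap.coe_comp, Function.comp_apply, LinearMap.coe_restrictScalars,
      Submodule.coe_subtype]
    rw [cW_pow_zero, cW_tmul, Polynomial.coeff_one_zero, one_smul]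
  have hh's : Function.Surjective h' := by
    intro q
    obtain ⟨fq, rfl⟩ := Submodule.mkQ_surjective _ q
    obtain ⟨x, hxΓ, hx⟩ := Submodule.mem_map.mp fq.2
    refine ⟨⟨x, hxΓ⟩, ?_⟩
    simp only [hh', LinearMap.coe_restrictScalars, LinearMap.coe_comp, Function.comp_apply,
      Submodule.mkQ_apply]
    congr 1
    exact Subtype.ext hx
  exact ⟨((LinearMap.quotKerEquivOfSurjective h' hh's).symm.trans
    (Submodule.quotEquivOfEq _ _ hker)).trans
    (LinearMap.quotKerEquivOfSurjective (M := ↥(Γ i)) ψ hψs)⟩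

end
end

section
/- Let (R^•, d_0) be a cochain complex of k-vector spaces in degrees ≤ 0 such that only H^{-1}(R^•, d_0) = 0 is assumed (no vanishing assumed in other negative degrees). Let d_ℏ^{(-1)}: R^{-1}_ℏ → R^0_ℏ and d_ℏ^{(-2)}: R^{-2}_ℏ → R^{-1}_ℏ be ℏ-linear maps reducing to d_0^{(-1)}, d_0^{(-2)} modulo ℏ, with d_ℏ^{(-1)} ∘ d_ℏ^{(-2)} = 0. Consider the three-term complex 0 → R^{-2}_ℏ → R^{-1}_ℏ → R^0_ℏ → 0 with these differentials, and let H^0_ℏ = R^0_ℏ / im(d_ℏ^{(-1)}), with filtration F_i H^0_ℏ = image of H^0 of the subcomplex ℏ^i·(three-term complex). Then F_i H^0_ℏ / F_{i+1} H^0_ℏ ≅ ℏ^i H^0(R^•, d_0) canonically as k[ℏ]-modules. -/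
noncomputable section

open Polynomial TensorProduct

namespace PerturbAux
open Pointwise
variable {k : Type*} [Field k] {V : ℕ → Type*}
  [∀ n, AddCommGroup (V n)] [∀ n, Module k (V n)]

lemma epsW_tmul (n : ℕ) (p : Polynomial k) (v : V n) :
    epsW k V n (p ⊗ₜ v) = p.eval 0 • v := by
  simp [epsW]

lemma epsW_one_tmul (n : ℕ) (v : V n) : epsW k V n ((1 : Polynomial k) ⊗ₜ v) = v := by
  simp [epsW_tmul]

lemma epsW_X_smul (n : ℕ) (w : Wc k V n) :
    epsW k V n ((X : Polynomial k) • w) = 0 := by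
  induction w using TensorProduct.induction_on with
  | zero => simp
  | tmul p v => rw [smul_tmul', smul_eq_mul, epsW_tmul]; simp
  | add a b ha hb => rw [smul_add, map_add, ha, hb, add_zero]

lemma decompW (n : ℕ) (w : Wc k V n) :
    ∃ w', w = (1 : Polynomial k) ⊗ₜ (epsW k V n w) + (X : Polynomial k) • w' := by
  induction w using TensorProduct.induction_on with
  | zero => exact ⟨0, by simp⟩
  | tmul p v =>
      refine ⟨p.divX ⊗ₜ v, ?_⟩
      rw [epsW_tmul, smul_tmul', smul_eq_mul, tmul_smul, smul_tmul', ← add_tmul]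
      congr 1
      rw [smul_eq_C_mul, mul_one, ← Polynomial.coeff_zero_eq_eval_zero, add_comm,
        Polynomial.X_mul_divX_add]
  | add a b ha hb =>
      obtain ⟨a', ha'⟩ := ha
      obtain ⟨b', hb'⟩ := hb
      refine ⟨a' + b', ?_⟩
      rw [map_add, tmul_add, smul_add]
      conv_lhs => rw [ha', hb']
      abel

lemma X_pow_smul_cancel (n t : ℕ) {x y : Wc k V n}
    (h : (X : Polynomial k) ^ t • x = (X : Polynomial k) ^ t • y) : x = y := by
  have hinj : Function.Injective (LinearMap.mulLeft k ((X : Polynomial k) ^ t)) := by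
    intro a b hab
    exact mul_left_cancel₀ (pow_ne_zero t Polynomial.X_ne_zero) hab
  have hr : Function.Injective
      (LinearMap.rTensor (V n) (LinearMap.mulLeft k ((X : Polynomial k) ^ t))) :=
    Module.Flat.rTensor_preserves_injective_linearMap _ hinj
  have key : ∀ z : Wc k V n,
      LinearMap.rTensor (V n) (LinearMap.mulLeft k ((X : Polynomial k) ^ t)) z
        = (X : Polynomial k) ^ t • z := by
    intro z
    induction z using TensorProduct.induction_on with
    | zero => simp
    | tmul p v => rw [smul_tmul', smul_eq_mul]; simp
    | add a b ha hb => rw [map_add, ha, hb, smul_add]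
  exact hr (by rw [key, key, h])

end PerturbAux

namespace PerturbAux
open Pointwise
variable {k : Type*} [Field k] {V : ℕ → Type*}
  [∀ n, AddCommGroup (V n)] [∀ n, Module k (V n)]

set_option maxHeartbeats 1000000 in
theorem mainAux
    (d : ∀ n, V (n + 1) →ₗ[k] V n)
    (hexactm1 : LinearMap.ker (d 0) ≤ LinearMap.range (d 1))
    (dh1 : Wc k V 1 →ₗ[Polynomial k] Wc k V 0)
    (dh2 : Wc k V 2 →ₗ[Polynomial k] Wc k V 1)
    (hdh : dh1.comp dh2 = 0)
    (hmod1 : (epsW k V 0).comp (dh1.restrictScalars k) = (d 0).comp (epsW k V 1))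
    (hmod2 : (epsW k V 1).comp (dh2.restrictScalars k) = (d 1).comp (epsW k V 2))
    (i : ℕ)
    (B : Submodule (Polynomial k) (Wc k V 0)) (hB : B = LinearMap.range dh1)
    (F : ℕ → Submodule (Polynomial k) ((Wc k V 0) ⧸ B))
    (hF : ∀ ℓ, F ℓ = (Ideal.span {(X : Polynomial k) ^ ℓ} •
      (⊤ : Submodule (Polynomial k) (Wc k V 0))).map B.mkQ) :
    Nonempty ((F i ⧸ Submodule.comap (F i).subtype (F (i + 1))) ≃ₗ[k]
      (V 0 ⧸ LinearMap.range (d 0))) := by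
  classical
  -- membership in the ideal-smul submodule
  have hΓ : ∀ (ℓ : ℕ) (x : Wc k V 0),
      x ∈ (Ideal.span {(X : Polynomial k) ^ ℓ} •
        (⊤ : Submodule (Polynomial k) (Wc k V 0))) ↔
        ∃ y, (X : Polynomial k) ^ ℓ • y = x := by
    intro ℓ x
    rw [Submodule.ideal_span_singleton_smul]
    constructor
    · intro h
      have h' : x ∈ (X : Polynomial k) ^ ℓ •
          ((⊤ : Submodule (Polynomial k) (Wc k V 0)) : Set (Wc k V 0)) := by
        rw [← Submodule.coe_pointwise_smul]; exact h
      obtain ⟨y, -, hy⟩ := Set.mem_smul_set.mp h'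
      exact ⟨y, hy⟩
    · rintro ⟨y, rfl⟩
      exact Submodule.smul_mem_pointwise_smul y _ ⊤ Submodule.mem_top
  have hFmem : ∀ (ℓ : ℕ) (q : (Wc k V 0) ⧸ B),
      q ∈ F ℓ ↔ ∃ y, B.mkQ ((X : Polynomial k) ^ ℓ • y) = q := by
    intro ℓ q
    rw [hF]
    constructor
    · rintro ⟨x, hx, rfl⟩
      obtain ⟨y, rfl⟩ := (hΓ ℓ x).mp hx
      exact ⟨y, rfl⟩
    · rintro ⟨y, rfl⟩
      exact ⟨_, (hΓ ℓ _).mpr ⟨y, rfl⟩, rfl⟩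
  -- epsilon facts
  have heps1 : ∀ z : Wc k V 1, epsW k V 0 (dh1 z) = d 0 (epsW k V 1 z) := by
    intro z; exact LinearMap.congr_fun hmod1 z
  have heps2 : ∀ z : Wc k V 2, epsW k V 1 (dh2 z) = d 1 (epsW k V 2 z) := by
    intro z; exact LinearMap.congr_fun hmod2 z
  -- the map φ : V 0 → (Wc k V 0) ⧸ B
  set φ : V 0 → (Wc k V 0) ⧸ B :=
    fun v => B.mkQ ((X : Polynomial k) ^ i • ((1 : Polynomial k) ⊗ₜ v)) with hφ
  have hφadd : ∀ a b, φ (a + b) = φ a + φ b := by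
    intro a b
    simp only [hφ, tmul_add, smul_add, map_add]
  have hφsmul : ∀ (c : k) (a : V 0), φ (c • a) = c • φ a := by
    intro c a
    simp only [hφ, tmul_smul]
    rw [smul_comm ((X : Polynomial k) ^ i) c, LinearMap.map_smul_of_tower]
  have hφmem : ∀ v, φ v ∈ F i := by
    intro v; exact (hFmem i _).mpr ⟨_, rfl⟩
  -- the map ψ into the graded quotient
  set T := (F i ⧸ Submodule.comap (F i).subtype (F (i + 1)))
  set ψ : V 0 →ₗ[k] T :=
    { toFun := fun v => Submodule.Quotient.mk ⟨φ v, hφmem v⟩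
      map_add' := by
        intro a b
        have h : (⟨φ (a + b), hφmem _⟩ : F i) = ⟨φ a, hφmem _⟩ + ⟨φ b, hφmem _⟩ :=
          Subtype.ext (hφadd a b)
        show Submodule.Quotient.mk (⟨φ (a + b), hφmem _⟩ : F i)
            = Submodule.Quotient.mk (⟨φ a, hφmem _⟩ : F i) + Submodule.Quotient.mk (⟨φ b, hφmem _⟩ : F i)
        rw [h, Submodule.Quotient.mk_add]
      map_smul' := by
        intro c a
        have h : (⟨φ (c • a), hφmem _⟩ : F i) = c • ⟨φ a, hφmem _⟩ :=
          Subtype.ext (hφsmul c a)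
        show Submodule.Quotient.mk (⟨φ (c • a), hφmem _⟩ : F i)
            = c • Submodule.Quotient.mk (⟨φ a, hφmem _⟩ : F i)
        rw [h, Submodule.Quotient.mk_smul] } with hψ
  have hψapply : ∀ v, ψ v = Submodule.Quotient.mk ⟨φ v, hφmem v⟩ := fun v => rfl
  -- surjectivity
  have hsurj : Function.Surjective ψ := by
    intro t
    obtain ⟨⟨q, hq⟩, rfl⟩ := Submodule.Quotient.mk_surjective _ t
    obtain ⟨y, hyq⟩ := (hFmem i q).mp hq
    obtain ⟨y', hy'⟩ := decompW 0 y
    refine ⟨epsW k V 0 y, ?_⟩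
    rw [hψapply, Submodule.Quotient.eq]
    refine Submodule.mem_comap.mpr ?_
    have hval : ((⟨φ (epsW k V 0 y), hφmem _⟩ - ⟨q, hq⟩ :
        F i) : (Wc k V 0) ⧸ B) = φ (epsW k V 0 y) - q := rfl
    have hx : ∀ (v0 : V 0) (yy y'' : Wc k V 0), yy = (1 : Polynomial k) ⊗ₜ v0 + (X : Polynomial k) • y'' →
        (X : Polynomial k) ^ i • ((1 : Polynomial k) ⊗ₜ v0) - (X : Polynomial k) ^ i • yy
          = -((X : Polynomial k) ^ (i + 1) • y'') := by
      rintro v0 yy y'' rfl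
      module
    have hsub : φ (epsW k V 0 y) - q = B.mkQ (-((X : Polynomial k) ^ (i + 1) • y')) := by
      rw [← hyq]
      show B.mkQ ((X : Polynomial k) ^ i • ((1 : Polynomial k) ⊗ₜ (epsW k V 0 y)))
          - B.mkQ ((X : Polynomial k) ^ i • y) = _
      rw [← map_sub, hx _ _ _ hy']
    rw [Submodule.subtype_apply, hval, hsub]
    exact neg_mem ((hFmem (i + 1) _).mpr ⟨y', rfl⟩)
  -- mkQ kills the image of dh1
  have hmkQ_dh1 : ∀ z : Wc k V 1, B.mkQ (dh1 z) = 0 := by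
    intro z
    rw [Submodule.mkQ_apply, Submodule.Quotient.mk_eq_zero, hB]
    exact ⟨z, rfl⟩
  -- key induction
  have key : ∀ (m t : ℕ) (v : V 0) (z : Wc k V 1) (w : Wc k V 0),
      dh1 ((X : Polynomial k) ^ t • z)
        = (X : Polynomial k) ^ (t + m) • ((1 : Polynomial k) ⊗ₜ v)
          - (X : Polynomial k) ^ (t + m + 1) • w →
      v ∈ LinearMap.range (d 0) := by
    intro m
    induction m with
    | zero =>
      intro t v z w h
      rw [map_smul] at h
      have h2 : (X : Polynomial k) ^ t • dh1 z
          = (X : Polynomial k) ^ t • (((1 : Polynomial k) ⊗ₜ v) - (X : Polynomial k) • w) := by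
        rw [h]
        module
      have h3 := X_pow_smul_cancel 0 t h2
      refine ⟨epsW k V 1 z, ?_⟩
      rw [← heps1, h3, map_sub, epsW_one_tmul, epsW_X_smul, sub_zero]
    | succ m ih =>
      intro t v z w h
      rw [map_smul] at h
      have h2 : (X : Polynomial k) ^ t • dh1 z
          = (X : Polynomial k) ^ t • ((X : Polynomial k) •
            ((X : Polynomial k) ^ m • ((1 : Polynomial k) ⊗ₜ v)
              - (X : Polynomial k) ^ (m + 1) • w)) := by
        rw [h]
        module
      have h3 := X_pow_smul_cancel 0 t h2
      have h4 : d 0 (epsW k V 1 z) = 0 := by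
        rw [← heps1, h3, epsW_X_smul]
      obtain ⟨u2, hu2⟩ := hexactm1 (LinearMap.mem_ker.mpr h4)
      obtain ⟨z2, hz2⟩ := decompW 1 (z - dh2 ((1 : Polynomial k) ⊗ₜ u2))
      have hez : epsW k V 1 (z - dh2 ((1 : Polynomial k) ⊗ₜ u2)) = 0 := by
        rw [map_sub, heps2, epsW_one_tmul, hu2, sub_self]
      rw [hez, tmul_zero, zero_add] at hz2
      refine ih (t + 1) v z2 w ?_
      have hdh' : dh1 (dh2 ((1 : Polynomial k) ⊗ₜ u2)) = 0 := LinearMap.congr_fun hdh _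
      have hexp1 : t + 1 + m = t + (m + 1) := by omega
      rw [hexp1]
      calc dh1 ((X : Polynomial k) ^ (t + 1) • z2)
          = (X : Polynomial k) ^ (t + 1) • dh1 z2 := map_smul _ _ _
        _ = (X : Polynomial k) ^ t • ((X : Polynomial k) • dh1 z2) := by
            rw [← mul_smul ((X : Polynomial k) ^ t) (X : Polynomial k) (dh1 z2),
              ← pow_succ (X : Polynomial k) t]
        _ = (X : Polynomial k) ^ t • dh1 ((X : Polynomial k) • z2) := by rw [map_smul]
        _ = (X : Polynomial k) ^ t •
            dh1 (z - dh2 ((1 : Polynomial k) ⊗ₜ u2)) := by rw [← hz2]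
        _ = (X : Polynomial k) ^ t • (dh1 z - 0) := by rw [map_sub, hdh']
        _ = (X : Polynomial k) ^ t • dh1 z := by rw [sub_zero]
        _ = _ := h
  -- kernel equality
  have hker : LinearMap.ker ψ = LinearMap.range (d 0) := by
    ext v
    rw [LinearMap.mem_ker, hψapply, Submodule.Quotient.mk_eq_zero, Submodule.mem_comap,
      Submodule.subtype_apply]
    constructor
    · intro hv
      obtain ⟨w, hw⟩ := (hFmem (i + 1) _).mp hv
      have h0 : B.mkQ ((X : Polynomial k) ^ i • ((1 : Polynomial k) ⊗ₜ v)
          - (X : Polynomial k) ^ (i + 1) • w) = 0 := by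
        rw [map_sub, hw]
        exact sub_self _
      have hw' : (X : Polynomial k) ^ i • ((1 : Polynomial k) ⊗ₜ v)
          - (X : Polynomial k) ^ (i + 1) • w ∈ LinearMap.range dh1 := by
        rw [← hB]
        exact (Submodule.Quotient.mk_eq_zero B).mp (by rw [← Submodule.mkQ_apply]; exact h0)
      obtain ⟨z, hz⟩ := hw'
      refine key i 0 v z w ?_
      rw [pow_zero, one_smul, hz, zero_add]
    · rintro ⟨u, rfl⟩
      obtain ⟨y', hy'⟩ := decompW 0 (dh1 ((1 : Polynomial k) ⊗ₜ u))
      rw [heps1, epsW_one_tmul] at hy'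
      have hx : (X : Polynomial k) ^ i • ((1 : Polynomial k) ⊗ₜ (d 0 u))
          = dh1 ((X : Polynomial k) ^ i • ((1 : Polynomial k) ⊗ₜ u))
            - (X : Polynomial k) ^ (i + 1) • y' := by
        rw [map_smul, hy']
        module
      have hφval : φ (d 0 u) = -(B.mkQ ((X : Polynomial k) ^ (i + 1) • y')) := by
        show B.mkQ ((X : Polynomial k) ^ i • ((1 : Polynomial k) ⊗ₜ (d 0 u))) = _
        rw [hx]
        rw [map_sub]
        rw [hmkQ_dh1]
        rw [zero_sub]
      show φ (d 0 u) ∈ F (i + 1)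
      rw [hφval, ← map_neg]
      exact (hFmem (i + 1) _).mpr ⟨-y', by rw [smul_neg]⟩
  exact ⟨((Submodule.quotEquivOfEq _ _ hker.symm).trans
    (ψ.quotKerEquivOfSurjective hsurj)).symm⟩

end PerturbAux

/-- Second main theorem: let `(R^•, d₀)` be a complex of `k`-vector spaces in degrees `≤ 0`
(degree `-n` is `V n`), assuming only `H^{-1}(R^•, d₀) = 0`. Let `d_ℏ^{(-1)} : R^{-1}_ℏ → R⁰_ℏ`
and `d_ℏ^{(-2)} : R^{-2}_ℏ → R^{-1}_ℏ` be `ℏ`-linear maps reducing mod `ℏ` to `d₀^{(-1)}`,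
`d₀^{(-2)}`, with `d_ℏ^{(-1)} ∘ d_ℏ^{(-2)} = 0`. Then for `H⁰_ℏ = R⁰_ℏ / im d_ℏ^{(-1)}` with
filtration `F_ℓ` induced by the subcomplexes `ℏ^ℓ·(three-term complex)`, one has
`F_i H⁰_ℏ / F_{i+1} H⁰_ℏ ≅ ℏ^i H⁰(R^•, d₀) ≅ H⁰(R^•, d₀)`. -/
theorem perturbed_three_term_complex_graded_H0
    (k : Type*) [Field k] (V : ℕ → Type*)
    [∀ n, AddCommGroup (V n)] [∀ n, Module k (V n)]
    (d : ∀ n, V (n + 1) →ₗ[k] V n)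
    (hd2 : ∀ n, (d n).comp (d (n + 1)) = 0)
    (hexactm1 : LinearMap.ker (d 0) ≤ LinearMap.range (d 1))
    (dh1 : Wc k V 1 →ₗ[Polynomial k] Wc k V 0)
    (dh2 : Wc k V 2 →ₗ[Polynomial k] Wc k V 1)
    (hdh : dh1.comp dh2 = 0)
    (hmod1 : (epsW k V 0).comp (dh1.restrictScalars k) = (d 0).comp (epsW k V 1))
    (hmod2 : (epsW k V 1).comp (dh2.restrictScalars k) = (d 1).comp (epsW k V 2)) :
    ∀ i : ℕ,
      letI B : Submodule (Polynomial k) (Wc k V 0) := LinearMap.range dh1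
      letI Γ : ℕ → Submodule (Polynomial k) (Wc k V 0) :=
        fun ℓ => Ideal.span {(Polynomial.X : Polynomial k) ^ ℓ} • ⊤
      letI F : ℕ → Submodule (Polynomial k) ((Wc k V 0) ⧸ B) :=
        fun ℓ => (Γ ℓ).map B.mkQ
      Nonempty ((F i ⧸ Submodule.comap (F i).subtype (F (i + 1))) ≃ₗ[k]
        (V 0 ⧸ LinearMap.range (d 0))) := by
  intro i
  exact PerturbAux.mainAux d hexactm1 dh1 dh2 hdh hmod1 hmod2 i _ rfl _ (fun ℓ => rfl)

end
end

section
/- Let A be the quotient of T(x,y,z)[ℏ] by the two-sided ideal generated by [x,y]+ℏyx, [y,z]+ℏzy, [z,x]+ℏxz. Then the element T = −zyx + xzy of A satisfies (ℏ − 1)·T = 0 in A; consequently T = ℏ^ℓ T for all ℓ ≥ 0, so T lies in ∩_{ℓ≥0} ℏ^ℓ A. -/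
noncomputable section

open Polynomial

lemma eg_aux {R : Type*} [Ring R] (x y z h : R)
    (hcz : z * h = h * z)
    (h1 : x * y - y * x + h * (y * x) = 0)
    (h3 : z * x - x * z + h * (x * z) = 0) :
    (h - 1) * (- (z * y * x) + x * z * y) = 0 := by
  have h1' : x * y = y * x - h * (y * x) := by rw [← sub_eq_zero, ← h1]; abel
  have h3' : z * x = x * z - h * (x * z) := by rw [← sub_eq_zero, ← h3]; abel
  have e1 : z * x * y = x * z * y - h * (x * z * y) := by rw [h3']; noncomm_ring
  have e2 : z * (x * y) = z * y * x - h * (z * y * x) := by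
    rw [h1', mul_sub, ← mul_assoc z h (y * x), hcz]; noncomm_ring
  have main : x * z * y - h * (x * z * y) = z * y * x - h * (z * y * x) := by
    rw [← e1, mul_assoc, e2]
  have expand : (h - 1) * (- (z * y * x) + x * z * y)
      = (z * y * x - h * (z * y * x)) - (x * z * y - h * (x * z * y)) := by noncomm_ring
  rw [expand, ← main, sub_self]

lemma eg_aux2 {R : Type*} [Ring R] (h T : R) (hT : (h - 1) * T = 0) :
    ∀ ℓ : ℕ, T = h ^ ℓ * T := by
  have hstep : h * T = T := by rwa [sub_mul, one_mul, sub_eq_zero] at hT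
  intro ℓ
  induction ℓ with
  | zero => simp
  | succ n ih => rw [pow_succ', mul_assoc h (h ^ n) T, ← ih, hstep]

/-- The relations `[x,y] + ℏyx ~ 0`, `[y,z] + ℏzy ~ 0`, `[z,x] + ℏxz ~ 0` in
`T(x,y,z)[ℏ]` (letters `x = 0`, `y = 1`, `z = 2`), coming from the Etingof–Ginzburg
potential `Φ_ℏ = -ℏ·Cycl(zyx)`. -/
def egqRel (k : Type*) [Field k] :
    FreeAlgebra (Polynomial k) (Fin 3) → FreeAlgebra (Polynomial k) (Fin 3) → Prop :=
  fun r s =>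
    letI x := FreeAlgebra.ι (Polynomial k) (0 : Fin 3)
    letI y := FreeAlgebra.ι (Polynomial k) (1 : Fin 3)
    letI z := FreeAlgebra.ι (Polynomial k) (2 : Fin 3)
    letI ℏ := algebraMap (Polynomial k) (FreeAlgebra (Polynomial k) (Fin 3)) Polynomial.X
    ((r = (x * y - y * x) + ℏ * (y * x)) ∨
     (r = (y * z - z * y) + ℏ * (z * y)) ∨
     (r = (z * x - x * z) + ℏ * (x * z))) ∧ s = 0

/-- In `A = T(x,y,z)[ℏ]/([x,y]+ℏyx, [y,z]+ℏzy, [z,x]+ℏxz)`, the element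
`T = -zyx + xzy` satisfies `(ℏ-1)·T = 0`; consequently `T = ℏ^ℓ·T` for all `ℓ ≥ 0`,
so `T` lies in `⋂_{ℓ≥0} ℏ^ℓ A`. -/
theorem eg_element_in_all_hbar_powers (k : Type*) [Field k] :
    letI A := RingQuot (egqRel k)
    letI π := RingQuot.mkAlgHom (Polynomial k) (egqRel k)
    letI x : A := π (FreeAlgebra.ι (Polynomial k) (0 : Fin 3))
    letI y : A := π (FreeAlgebra.ι (Polynomial k) (1 : Fin 3))
    letI z : A := π (FreeAlgebra.ι (Polynomial k) (2 : Fin 3))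
    letI ℏA : A := algebraMap (Polynomial k) A Polynomial.X
    letI T : A := - (z * y * x) + x * z * y
    (ℏA - 1) * T = 0 ∧ ∀ ℓ : ℕ, T = ℏA ^ ℓ * T := by
  set π := RingQuot.mkAlgHom (Polynomial k) (egqRel k) with hπ
  set x := π (FreeAlgebra.ι (Polynomial k) (0 : Fin 3)) with hx
  set y := π (FreeAlgebra.ι (Polynomial k) (1 : Fin 3)) with hy
  set z := π (FreeAlgebra.ι (Polynomial k) (2 : Fin 3)) with hz
  set ℏA := algebraMap (Polynomial k) (RingQuot (egqRel k)) Polynomial.X with hℏ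
  have key : ∀ a b : FreeAlgebra (Polynomial k) (Fin 3), egqRel k a b → π a = π b :=
    fun a b h => RingQuot.mkAlgHom_rel _ h
  have h1 := key _ 0 ⟨Or.inl rfl, rfl⟩
  have h3 := key _ 0 ⟨Or.inr (Or.inr rfl), rfl⟩
  simp only [map_add, map_sub, map_mul, map_zero, AlgHom.commutes] at h1 h3
  simp only [← hx, ← hy, ← hz, ← hℏ] at h1 h3
  have hcz : z * ℏA = ℏA * z := (Algebra.commutes Polynomial.X z).symm
  have hT := eg_aux x y z ℏA hcz h1 h3
  exact ⟨hT, eg_aux2 ℏA _ hT⟩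

end
end

section
/- Let α_{ij}^{ab} ∈ k (1 ≤ i,j,a,b ≤ n) satisfy α_{ij}^{ab} = −α_{ji}^{ab} and the identity Cycl_{i,j,k} Σ_s (α_{jk}^{sb} α_{is}^{cd} + α_{jk}^{cs} α_{is}^{db}) = 0 for all i,j,k,b,c,d (where Cycl_{i,j,k} denotes the sum over cyclic permutations of (i,j,k)). Define β_{ij}^{ab} = α_{ij}^{ab} + α_{ij}^{ba}. Then the symmetrization in the upper indices yields the Poisson (Jacobi) identity: for all i,j,k and all a,b,c, Sym_{a,b,c} Σ_s (β_{is}^{ab} β_{jk}^{sc} + β_{js}^{ab} β_{ki}^{sc} + β_{ks}^{ab} β_{ij}^{sc}) = 0, i.e. the quadratic bivector β = Σ β_{ij}^{ab} x_a x_b ∂_i ∧ ∂_j is Poisson. -/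
/-- If `α_{ij}^{ab}` is antisymmetric in `i,j` and satisfies
`Cycl_{i,j,k} Σ_s (α_{jk}^{sb} α_{is}^{cd} + α_{jk}^{cs} α_{is}^{db}) = 0`, then the
symmetrization `β_{ij}^{ab} = α_{ij}^{ab} + α_{ij}^{ba}` satisfies the Poisson (Jacobi)
identity `Sym_{a,b,c} Σ_s (β_{is}^{ab} β_{jk}^{sc} + β_{js}^{ab} β_{ki}^{sc} +
β_{ks}^{ab} β_{ij}^{sc}) = 0`, i.e. the quadratic bivector `β` is Poisson. -/
theorem special_implies_poisson
    (k : Type*) [Field k] (n : ℕ) (α : Fin n → Fin n → Fin n → Fin n → k)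
    (hanti : ∀ i j a b, α i j a b = - α j i a b)
    (hspecial : ∀ i j l b c d,
      (∑ s : Fin n, (α j l s b * α i s c d + α j l c s * α i s d b)) +
      (∑ s : Fin n, (α l i s b * α j s c d + α l i c s * α j s d b)) +
      (∑ s : Fin n, (α i j s b * α l s c d + α i j c s * α l s d b)) = 0) :
    ∀ i j l a b c,
      letI β : Fin n → Fin n → Fin n → Fin n → k :=
        fun i j a b => α i j a b + α i j b a
      letI g : Fin n → Fin n → Fin n → k := fun u v w =>
        ∑ s : Fin n, (β i s u v * β j l s w + β j s u v * β l i s w + β l s u v * β i j s w)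
      g a b c + g a c b + g b a c + g b c a + g c a b + g c b a = 0 := by
  intro i j l a b c
  simp only
  have h1 := hspecial i j l a b c
  have h2 := hspecial i j l a c b
  have h3 := hspecial i j l b a c
  have h4 := hspecial i j l b c a
  have h5 := hspecial i j l c a b
  have h6 := hspecial i j l c b a
  simp only [mul_add, add_mul, Finset.sum_add_distrib, mul_comm] at h1 h2 h3 h4 h5 h6 ⊢
  linear_combination 2*h1 + 2*h2 + 2*h3 + 2*h4 + 2*h5 + 2*h6
end
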